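/- Let M ∈ ℕ with M ≥ 2, μ ∈ ℝ, N ≥ 1, let s ∈ ℂ^N be nonzero and let σ ∈ ℝ. Let a ∈ ℂ^M be the ULA steering vector with entries a_m = exp(i·m·μ) for m = 0,…,M−1, and let J₁, J₂ ∈ ℂ^{(M−1)×M} be the maximum-overlap selection matrices with (J₁)_{k,m} = 1 if m = k and 0 otherwise, and (J₂)_{k,m} = 1 if m = k+1 and 0 otherwise. Define ãᵀ := (√M/(M−1)) · (J₁·a)ᴴ · (e^{−iμ}·J₂ − J₁) · (I_M − (1/M)·a·aᴴ) and s̃ := conj(s)/(√M·‖s‖²) ∈ ℂ^N. Then the first-order mean square error of 1-D Standard ESPRIT for a single source, (σ²/2)·‖s̃‖²·‖ã‖², equals (σ²/‖s‖²)·1/(M−1)²; that is, with effective SNR ρ̂ := ‖s‖²/σ², the MSE equals (1/ρ̂)·1/(M−1)². -/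

import Mathlib

open Matrix BigOperators

/-- Mean square error part of Theorem 5 of the paper: for a single source on an
`M`-element ULA with symbol vector `s` and noise variance `σ²`, the first-order MSE of
1-D Standard ESPRIT, `(σ²/2)·‖s̃‖²·‖ã‖²`, equals `(σ²/‖s‖²)·1/(M−1)²`, i.e.
`(1/ρ̂)·1/(M−1)²` with effective SNR `ρ̂ = ‖s‖²/σ²`. -/
theorem single_source_esprit_mse
    (M : ℕ) (hM : 2 ≤ M) (μ : ℝ)
    (N : ℕ) (hN : 1 ≤ N) (s : Fin N → ℂ) (hs : s ≠ 0) (σ : ℝ)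
    (a : Fin M → ℂ)
    (ha : ∀ m, a m = Complex.exp (Complex.I * ((m : ℕ) : ℂ) * (μ : ℂ)))
    (J1 J2 : Matrix (Fin (M - 1)) (Fin M) ℂ)
    (hJ1 : ∀ k m, J1 k m = if (m : ℕ) = (k : ℕ) then 1 else 0)
    (hJ2 : ∀ k m, J2 k m = if (m : ℕ) = (k : ℕ) + 1 then 1 else 0)
    (atilde : Fin M → ℂ)
    (hat : atilde = ((Real.sqrt M / ((M : ℝ) - 1) : ℝ) : ℂ) •
      (star (J1 *ᵥ a) ᵥ*
        ((Complex.exp (-(Complex.I * (μ : ℂ))) • J2 - J1) *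
          ((1 : Matrix (Fin M) (Fin M) ℂ) - ((M : ℂ))⁻¹ • vecMulVec a (star a)))))
    (stilde : Fin N → ℂ)
    (hst : ∀ j, stilde j =
      (starRingEnd ℂ) (s j) / (((Real.sqrt M : ℝ) : ℂ) * (((∑ i, ‖s i‖ ^ 2 : ℝ)) : ℂ))) :
    (σ ^ 2 / 2) * (∑ j, ‖stilde j‖ ^ 2) * (∑ m, ‖atilde m‖ ^ 2) =
      (σ ^ 2 / (∑ i, ‖s i‖ ^ 2)) * (1 / ((M : ℝ) - 1) ^ 2) := by
  have hMpos : (0:ℝ) < M := by positivity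
  -- helper: product identity for exponentials
  have hexp : ∀ k : ℕ, Complex.exp (-(Complex.I * (μ:ℂ))) *
      (starRingEnd ℂ) (Complex.exp (Complex.I * (k:ℂ) * (μ:ℂ))) =
      (starRingEnd ℂ) (Complex.exp (Complex.I * ((k:ℕ)+1 : ℂ) * (μ:ℂ))) := by
    intro k
    rw [← Complex.exp_conj, ← Complex.exp_conj, ← Complex.exp_add]
    congr 1
    simp only [_root_.map_mul, Complex.conj_I, map_natCast, Complex.conj_ofReal, _root_.map_add, _root_.map_one]
    ring
  have hnorm1 : ∀ m : Fin M, ‖a m‖ = 1 := by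
    intro m
    rw [ha m]
    rw [Complex.norm_exp]
    simp [Complex.mul_re, Complex.mul_im]
  set S : ℝ := ∑ i, ‖s i‖ ^ 2 with hSdef
  have hS0 : 0 < S := by
    obtain ⟨i, hi⟩ : ∃ i, s i ≠ 0 := by
      by_contra h; push_neg at h; exact hs (funext h)
    exact Finset.sum_pos' (fun j _ => by positivity)
      ⟨i, Finset.mem_univ i, pow_pos (norm_pos_iff.mpr hi) 2⟩
  -- stilde sum
  have hstSum : (∑ j, ‖stilde j‖ ^ 2) = 1 / (M * S) := by
    have : ∀ j, ‖stilde j‖ ^ 2 = ‖s j‖ ^ 2 / (M * S^2) := by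
      intro j
      rw [hst j, norm_div, norm_mul, RCLike.norm_conj, Complex.norm_real, Complex.norm_real, Real.norm_eq_abs, Real.norm_eq_abs,
        abs_of_nonneg (Real.sqrt_nonneg _), abs_of_nonneg hS0.le, div_pow, mul_pow,
        Real.sq_sqrt hMpos.le]
    rw [Finset.sum_congr rfl (fun j _ => this j), ← Finset.sum_div, ← hSdef]
    rw [div_eq_div_iff (by positivity) (by positivity)]
    ring
  -- indices
  have hlt0 : 0 < M := by omega
  have hltL : M - 1 < M := by omega
  set m0 : Fin M := ⟨0, hlt0⟩ with hm0def
  set mL : Fin M := ⟨M-1, hltL⟩ with hmLdef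
  set v : Fin M → ℂ := fun m =>
    (if m = mL then (starRingEnd ℂ) (a m) else 0) - (if m = m0 then 1 else 0) with hvdef
  have hconjmul : ∀ m : Fin M, (starRingEnd ℂ) (a m) * a m = 1 := by
    intro m
    rw [mul_comm, Complex.mul_conj]
    have h1 : Complex.normSq (a m) = 1 := by
      rw [Complex.normSq_eq_norm_sq, hnorm1 m]
      norm_num
    rw [h1]
    norm_num
  have ham0 : a m0 = 1 := by
    rw [ha m0]
    simp [hm0def]
  have hm0neqmL : m0 ≠ mL := by
    intro h
    have := congrArg Fin.val h
    simp [hm0def, hmLdef] at this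
    omega
  -- J1 *ᵥ a
  have hJa : ∀ k : Fin (M-1), (J1 *ᵥ a) k = a ⟨(k:ℕ), by omega⟩ := by
    intro k
    simp only [Matrix.mulVec, dotProduct, hJ1, ite_mul, one_mul, zero_mul]
    rw [Finset.sum_eq_single (⟨(k:ℕ), by omega⟩ : Fin M)]
    · simp
    · intro b _ hb
      rw [if_neg]
      intro h
      exact hb (Fin.ext h)
    · simp
  have hxB : star (J1 *ᵥ a) ᵥ* (Complex.exp (-(Complex.I * (μ:ℂ))) • J2 - J1) = v := by
    funext m
    have expand : ∀ k : Fin (M-1),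
        (starRingEnd ℂ) ((J1 *ᵥ a) k) *
          ((Complex.exp (-(Complex.I * (μ:ℂ))) • J2 - J1) k m) =
        Complex.exp (-(Complex.I * (μ:ℂ))) *
          (if (m:ℕ) = (k:ℕ)+1 then (starRingEnd ℂ) (a ⟨(k:ℕ), by omega⟩) else 0) -
        (if (m:ℕ) = (k:ℕ) then (starRingEnd ℂ) (a ⟨(k:ℕ), by omega⟩) else 0) := by
      intro k
      rw [hJa k]
      simp only [Matrix.sub_apply, Matrix.smul_apply, hJ1, hJ2, smul_eq_mul]
      split_ifs <;> ring
    simp only [Matrix.vecMul, dotProduct, Pi.star_apply, Complex.star_def]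
    rw [Finset.sum_congr rfl (fun k _ => expand k), Finset.sum_sub_distrib,
      ← Finset.mul_sum]
    by_cases hm0 : (m:ℕ) = 0
    · have e1 : (∑ k : Fin (M-1),
          (if (m:ℕ) = (k:ℕ)+1 then (starRingEnd ℂ) (a ⟨(k:ℕ), by omega⟩) else 0)) = 0 :=
        Finset.sum_eq_zero (fun k _ => by rw [if_neg]; omega)
      have e2 : (∑ k : Fin (M-1),
          (if (m:ℕ) = (k:ℕ) then (starRingEnd ℂ) (a ⟨(k:ℕ), by omega⟩) else 0)) =
          (starRingEnd ℂ) (a m) := by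
        rw [Finset.sum_eq_single (⟨0, by omega⟩ : Fin (M-1))]
        · rw [if_pos (by simpa using hm0)]
          congr 1
          exact congrArg a (Fin.ext (by simpa using hm0.symm))
        · intro b _ hb
          rw [if_neg]
          intro h
          exact hb (Fin.ext (by simp only [Fin.val_mk]; omega))
        · simp
      rw [e1, e2, mul_zero]
      simp only [hvdef]
      have hmm0 : m = m0 := Fin.ext (by simpa using hm0)
      rw [if_neg (by rw [hmm0]; exact fun h => hm0neqmL h), if_pos hmm0, hmm0, ham0]
      simp
    · by_cases hmL : (m:ℕ) = M-1
      · have e2 : (∑ k : Fin (M-1),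
            (if (m:ℕ) = (k:ℕ) then (starRingEnd ℂ) (a ⟨(k:ℕ), by omega⟩) else 0)) = 0 :=
          Finset.sum_eq_zero (fun k _ => by rw [if_neg]; have := k.isLt; omega)
        have e1 : (∑ k : Fin (M-1),
            (if (m:ℕ) = (k:ℕ)+1 then (starRingEnd ℂ) (a ⟨(k:ℕ), by omega⟩) else 0)) =
            (starRingEnd ℂ) (a ⟨M-2, by omega⟩) := by
          rw [Finset.sum_eq_single (⟨M-2, by omega⟩ : Fin (M-1))]
          · rw [if_pos (by simp; omega)]
          · intro b _ hb
            rw [if_neg]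
            intro h
            exact hb (Fin.ext (by simp; omega))
          · simp
        rw [e1, e2, sub_zero]
        simp only [hvdef]
        have hmmL : m = mL := Fin.ext (by simpa using hmL)
        rw [if_pos hmmL, if_neg (by rw [hmmL]; exact fun h => hm0neqmL h.symm)]
        rw [ha ⟨M-2, by omega⟩, ha m]
        have := hexp (M-2)
        rw [this]
        rw [sub_zero]
        congr 2
        push_cast [hmL]
        have h2 : ((M-2 : ℕ) : ℂ) = (M:ℂ) - 2 := by push_cast [Nat.cast_sub (by omega : 2 ≤ M)]; ring
        have hL : ((M-1 : ℕ) : ℂ) = (M:ℂ) - 1 := by push_cast [Nat.cast_sub (by omega : 1 ≤ M)]; ring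
        rw [h2, hL]
        ring
      · -- interior
        have e1 : (∑ k : Fin (M-1),
            (if (m:ℕ) = (k:ℕ)+1 then (starRingEnd ℂ) (a ⟨(k:ℕ), by omega⟩) else 0)) =
            (starRingEnd ℂ) (a ⟨(m:ℕ)-1, by omega⟩) := by
          rw [Finset.sum_eq_single (⟨(m:ℕ)-1, by have := m.isLt; omega⟩ : Fin (M-1))]
          · rw [if_pos (by simp; omega)]
          · intro b _ hb
            rw [if_neg]
            intro h
            exact hb (Fin.ext (by simp; omega))
          · simp
        have e2 : (∑ k : Fin (M-1),
            (if (m:ℕ) = (k:ℕ) then (starRingEnd ℂ) (a ⟨(k:ℕ), by omega⟩) else 0)) =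
            (starRingEnd ℂ) (a m) := by
          rw [Finset.sum_eq_single (⟨(m:ℕ), by have := m.isLt; omega⟩ : Fin (M-1))]
          · rw [if_pos (by simp)]
          · intro b _ hb
            rw [if_neg]
            intro h
            exact hb (Fin.ext (by simp; omega))
          · simp
        rw [e1, e2]
        simp only [hvdef]
        rw [if_neg (by intro h; apply hmL; simpa using congrArg Fin.val h),
          if_neg (by intro h; apply hm0; simpa using congrArg Fin.val h)]
        rw [ha ⟨(m:ℕ)-1, by omega⟩, ha m]
        have := hexp ((m:ℕ)-1)
        rw [this]
        have harg : (((m:ℕ)-1 : ℕ) : ℂ) + 1 = ((m:ℕ) : ℂ) := by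
          rw [show (((m:ℕ)-1 : ℕ) : ℂ) = (((m:ℕ) : ℂ)) - 1 by
            push_cast [Nat.cast_sub (by omega : 1 ≤ (m:ℕ))]; ring]
          ring
        rw [harg]
        ring
  -- v ᵥ* P = v
  have hsumva : ∑ l, v l * a l = 0 := by
    simp only [hvdef, sub_mul, ite_mul, zero_mul, one_mul]
    rw [Finset.sum_sub_distrib, Finset.sum_ite_eq', Finset.sum_ite_eq']
    simp [hconjmul mL, ham0]
  have hvP : v ᵥ* ((1 : Matrix (Fin M) (Fin M) ℂ) - ((M : ℂ))⁻¹ • vecMulVec a (star a)) = v := by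
    funext m
    simp only [Matrix.vecMul, dotProduct, Matrix.sub_apply, Matrix.smul_apply,
      Matrix.vecMulVec_apply, Pi.star_apply, Complex.star_def, smul_eq_mul, mul_sub]
    rw [Finset.sum_sub_distrib]
    have e1 : (∑ l, v l * (1 : Matrix (Fin M) (Fin M) ℂ) l m) = v m := by
      simp only [Matrix.one_apply, mul_ite, mul_one, mul_zero]
      rw [Finset.sum_ite_eq']
      simp
    have e2 : (∑ l, v l * ((M:ℂ)⁻¹ * (a l * (starRingEnd ℂ) (a m)))) = 0 := by
      have : ∀ l, v l * ((M:ℂ)⁻¹ * (a l * (starRingEnd ℂ) (a m))) =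
          ((M:ℂ)⁻¹ * (starRingEnd ℂ) (a m)) * (v l * a l) := fun l => by ring
      rw [Finset.sum_congr rfl (fun l _ => this l), ← Finset.mul_sum, hsumva, mul_zero]
    rw [e1, e2, sub_zero]
  have hA : atilde = fun m => ((Real.sqrt M / ((M : ℝ) - 1) : ℝ) : ℂ) * v m := by
    rw [hat, ← Matrix.vecMul_vecMul, hxB, hvP]
    rfl
  have hvnormsum : (∑ m, ‖v m‖ ^ 2) = 2 := by
    have hvn : ∀ m, ‖v m‖ ^ 2 = (if m = mL then (1:ℝ) else 0) + (if m = m0 then 1 else 0) := by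
      intro m
      by_cases h1 : m = mL
      · have h2 : m ≠ m0 := by rw [h1]; exact fun h => hm0neqmL h.symm
        simp only [hvdef]
        rw [if_pos h1, if_neg h2, if_pos h1, if_neg h2, sub_zero, RCLike.norm_conj, hnorm1 m]
        norm_num
      · by_cases h2 : m = m0
        · simp only [hvdef]
          rw [if_neg h1, if_pos h2, if_neg h1, if_pos h2, zero_sub, norm_neg, norm_one]
          norm_num
        · simp only [hvdef]
          rw [if_neg h1, if_neg h2, if_neg h1, if_neg h2, sub_zero]
          norm_num
    rw [Finset.sum_congr rfl (fun m _ => hvn m), Finset.sum_add_distrib,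
      Finset.sum_ite_eq', Finset.sum_ite_eq']
    norm_num
  have hatSum : (∑ m, ‖atilde m‖ ^ 2) = 2 * M / ((M:ℝ) - 1) ^ 2 := by
    have : ∀ m, ‖atilde m‖ ^ 2 = (Real.sqrt M / ((M:ℝ) - 1)) ^ 2 * ‖v m‖ ^ 2 := by
      intro m
      rw [hA]
      simp only [norm_mul, Complex.norm_real, Real.norm_eq_abs, mul_pow, sq_abs]
    rw [Finset.sum_congr rfl (fun m _ => this m), ← Finset.mul_sum, hvnormsum,
      div_pow, Real.sq_sqrt hMpos.le]
    ring
  rw [hstSum, hatSum]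
  have hM1 : (M:ℝ) - 1 ≠ 0 := by
    have : (2:ℝ) ≤ M := by exact_mod_cast hM
    linarith
  field_simp
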